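/- (Lemma 3.1, existential form) For every integer λ ≥ 1 there exists a port numbering of the complete graph on 2^{λ+1} vertices such that in the resulting port-numbered clique all vertices have pairwise distinct views at depth λ (in particular all infinite views are pairwise distinct), while no vertex has a unique view at depth λ−1 (for every vertex v there is a vertex u ≠ v with V^{λ−1}(u) = V^{λ−1}(v)). Hence this clique has level of symmetry exactly λ. -/

import Mathlib

/-- A port-numbered graph on vertex type `V`: a finite connected simple graph in which,
at every vertex `v` of degree `deg v`, the incident edges are labeled by distinct port
numbers `0, …, deg v - 1`.  `next v i = some (u, j)` means that the edge with port
number `i` at `v` leads to the vertex `u`, at which it has port number `j`. -/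
structure PortGraph (V : Type*) [Fintype V] where
  /-- the degree of each vertex -/
  deg : V → ℕ
  /-- `next v i = some (u, j)` iff the edge with port `i` at `v` has `u` as its other
  endpoint, where it carries port number `j` -/
  next : V → ℕ → Option (V × ℕ)
  /-- exactly the ports `0, …, deg v - 1` are present at `v` -/
  next_isSome : ∀ v i, (next v i).isSome ↔ i < deg v
  /-- the port labeling is consistent at the two endpoints of every edge -/
  next_symm : ∀ v i u j, next v i = some (u, j) → next u j = some (v, i)
  /-- no self-loops -/
  next_ne : ∀ v i u j, next v i = some (u, j) → u ≠ v
  /-- no multiple edges: distinct ports at `v` lead to distinct neighbors -/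
  next_inj : ∀ v i i' u j j', next v i = some (u, j) → next v i' = some (u, j') → i = i'
  /-- the graph is connected -/
  connected : ∀ u v : V, Relation.ReflTransGen (fun a b => ∃ i j, next a i = some (b, j)) u v

namespace PortGraph

variable {V : Type*} [Fintype V]

/-- `P.viewEq t u v` means that the views of `u` and `v` truncated at depth `t` are equal:
`V^t(u) = V^t(v)`. -/
def viewEq (P : PortGraph V) : ℕ → V → V → Prop
  | 0, u, v => P.deg u = P.deg v
  | t + 1, u, v =>
      P.deg u = P.deg v ∧
        ∀ (i j j' : ℕ) (u' v' : V),
          P.next u i = some (u', j) → P.next v i = some (v', j') →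
          j = j' ∧ viewEq P t u' v'

/-- `P.ViewEq u v` means that the (infinite) views of `u` and `v` are equal:
`V(u) = V(v)`, i.e. `V^t(u) = V^t(v)` for every `t`. -/
def ViewEq (P : PortGraph V) (u v : V) : Prop := ∀ t, P.viewEq t u v

end PortGraph

namespace PortGraph

variable {V : Type*} [Fintype V]

/-- adjacency relation of a port-numbered graph -/
def Adj (P : PortGraph V) (a b : V) : Prop := ∃ i j, P.next a i = some (b, j)

/-- the underlying simple graph of a port-numbered graph -/
def toSimpleGraph (P : PortGraph V) : SimpleGraph V where
  Adj := P.Adj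
  symm := by
    constructor
    rintro a b ⟨i, j, h⟩
    exact ⟨j, i, P.next_symm a i b j h⟩
  loopless := by
    constructor
    rintro a ⟨i, j, h⟩
    exact P.next_ne a i a j h rfl

/-- `P.IsDiameter D` means that the diameter of `P` (the maximum distance between two
vertices) equals `D`. -/
def IsDiameter (P : PortGraph V) (D : ℕ) : Prop :=
  (∀ u v : V, P.toSimpleGraph.dist u v ≤ D) ∧ ∃ u v : V, P.toSimpleGraph.dist u v = D

end PortGraph

namespace PortGraph

variable {V : Type*} [Fintype V]

/-- `P.SymAt t` holds if there is a vertex `v` with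
`{u : V^t(u) = V^t(v)} = {u : V(u) = V(v)}`.  The level of symmetry of `P` is the least
such `t`. -/
def SymAt (P : PortGraph V) (t : ℕ) : Prop :=
  ∃ v : V, ∀ u : V, P.viewEq t u v ↔ P.ViewEq u v

end PortGraph


namespace L31

/-! ### special difference codes -/

/-- `spec lam c = some (t, b)` iff `c` is one of the two "special" codes at level `t`,
namely `c = 2^(t-1)` (`b = false`) or `c = 3 * 2^(t-1)` (`b = true`), with `1 ≤ t < lam`. -/
def spec (lam c : ℕ) : Option (ℕ × Bool) :=
  if c = 2 ^ c.log2 ∧ c.log2 + 2 ≤ lam then some (c.log2 + 1, false)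
  else if c = 3 * 2 ^ (c.log2 - 1) ∧ 1 ≤ c.log2 ∧ c.log2 + 1 ≤ lam then some (c.log2, true)
  else none

lemma log2_eq {m k : ℕ} (h1 : 2 ^ k ≤ m) (h2 : m < 2 ^ (k + 1)) : m.log2 = k := by
  have hm : m ≠ 0 := by
    have : (0:ℕ) < 2 ^ k := Nat.pow_pos (by norm_num)
    omega
  have ha := (Nat.le_log2 hm).2 h1
  have hb := (Nat.log2_lt hm).2 h2
  omega

lemma spec_some {lam c t : ℕ} {b : Bool} (h : spec lam c = some (t, b)) :
    1 ≤ t ∧ t < lam ∧ c = (bif b then 3 * 2 ^ (t - 1) else 2 ^ (t - 1)) := by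
  unfold spec at h
  split_ifs at h with h1 h2
  · obtain ⟨hc, hl⟩ := h1
    injection h with h; injection h with ht hb
    subst hb; simp only [cond_false]
    refine ⟨by omega, by omega, ?_⟩
    have : c.log2 = t - 1 := by omega
    rw [this] at hc; exact hc
  · obtain ⟨hc, h1, hl⟩ := h2
    injection h with h; injection h with ht hb
    subst hb; simp only [cond_true]
    refine ⟨by omega, by omega, ?_⟩
    rw [ht] at hc; exact hc

lemma spec_of {lam t : ℕ} (b : Bool) (h1 : 1 ≤ t) (h2 : t < lam) :
    spec lam (bif b then 3 * 2 ^ (t - 1) else 2 ^ (t - 1)) = some (t, b) := by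
  have hp : (0:ℕ) < 2 ^ (t - 1) := Nat.pow_pos (by norm_num)
  have h22 : 2 * 2 ^ (t-1) = 2 ^ t := by rw [← pow_succ']; congr 1; omega
  cases b
  · simp only [cond_false]
    have hl : (2 ^ (t - 1)).log2 = t - 1 := log2_eq le_rfl (Nat.pow_lt_pow_right one_lt_two (by omega))
    unfold spec
    split_ifs with ha hb
    · rw [hl]
      simp only [Option.some.injEq, Prod.mk.injEq]
      exact ⟨by omega, trivial⟩
    · exfalso; exact ha ⟨by rw [hl], by rw [hl]; omega⟩
    · exfalso; exact ha ⟨by rw [hl], by rw [hl]; omega⟩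
  · simp only [cond_true]
    have hl : (3 * 2 ^ (t - 1)).log2 = t := by
      refine log2_eq ?_ ?_
      · omega
      · calc 3 * 2 ^ (t-1) < 4 * 2 ^ (t-1) := by omega
          _ = 2 ^ (t+1) := by rw [show (4:ℕ) = 2^2 by norm_num, ← pow_add]; congr 1; omega
    unfold spec
    split_ifs with ha hb
    · exfalso; obtain ⟨ha1, -⟩ := ha; rw [hl] at ha1; omega
    · rw [hl]
    · exfalso; exact hb ⟨by rw [hl], by rw [hl]; omega, by rw [hl]; omega⟩

lemma spec_lt {lam c t : ℕ} {b : Bool} (h : spec lam c = some (t, b)) : c < 2 ^ lam := by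
  obtain ⟨h1, h2, h3⟩ := spec_some h
  have h6 : (0:ℕ) < 2 ^ (t-1) := Nat.pow_pos (by norm_num)
  have h4 : 3 * 2 ^ (t - 1) < 2 ^ (t + 1) := by
    calc 3 * 2 ^ (t-1) < 4 * 2 ^ (t-1) := by omega
      _ = 2 ^ (t+1) := by rw [show (4:ℕ) = 2^2 by norm_num, ← pow_add]; congr 1; omega
  have h5 : 2 ^ (t + 1) ≤ 2 ^ lam := Nat.pow_le_pow_right (by norm_num) (by omega)
  cases b <;> simp only [cond_false, cond_true] at h3 <;> omega

lemma spec_none_of_ge {lam c : ℕ} (h : 2 ^ lam ≤ c) : spec lam c = none := by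
  cases hs : spec lam c with
  | none => rfl
  | some p =>
    obtain ⟨t, b⟩ := p
    exact absurd (spec_lt hs) (by omega)

/-! ### xor utilities -/

lemma xor_shuffle (x a y b : ℕ) : (x ^^^ a) ^^^ (y ^^^ b) = (x ^^^ y) ^^^ (a ^^^ b) := by
  apply Nat.eq_of_testBit_eq
  intro i
  simp only [Nat.testBit_xor]
  cases x.testBit i <;> cases a.testBit i <;> cases y.testBit i <;> cases b.testBit i <;> rfl

lemma xor_left_cancel {a x y : ℕ} (h : a ^^^ x = a ^^^ y) : x = y := by
  have := congrArg (fun z => a ^^^ z) h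
  simpa only [xor_cancel_left] using this

lemma pow_xor3 (k : ℕ) : 2 ^ k ^^^ 2 ^ (k + 1) = 3 * 2 ^ k := by
  have h1 : (2:ℕ) ^ k = 1 <<< k := by rw [Nat.shiftLeft_eq, one_mul]
  have h2 : (2:ℕ) ^ (k+1) = 2 <<< k := by rw [Nat.shiftLeft_eq, pow_succ]; ring
  have h3 : 3 * 2 ^ k = 3 <<< k := by rw [Nat.shiftLeft_eq]
  rw [h3, h1, h2]
  apply Nat.eq_of_testBit_eq
  intro i
  simp only [Nat.testBit_xor, Nat.testBit_shiftLeft]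
  by_cases h : k ≤ i
  · simp only [ge_iff_le, h, decide_true, Bool.true_and]
    generalize i - k = m
    match m with
    | 0 => decide
    | 1 => decide
    | (m+2) =>
      have e4 : (4:ℕ) ≤ 2 ^ (m+2) := by
        calc (4:ℕ) = 2 ^ 2 := by norm_num
          _ ≤ 2 ^ (m+2) := Nat.pow_le_pow_right (by norm_num) (by omega)
      rw [Nat.testBit_lt_two_pow (by omega), Nat.testBit_lt_two_pow (by omega),
        Nat.testBit_lt_two_pow (by omega)]
      rfl
  · simp [h]

lemma testBit_3pow (k i : ℕ) : (3 * 2 ^ k).testBit i = (decide (i = k) || decide (i = k + 1)) := by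
  rw [← pow_xor3]
  simp only [Nat.testBit_xor, Nat.testBit_two_pow]
  by_cases h1 : i = k <;> by_cases h2 : i = k + 1 <;>
    simp [h1, h2, eq_comm] <;> omega

lemma testBit_mod4 (x i : ℕ) : (x % 4).testBit i = (decide (i < 2) && x.testBit i) := by
  rw [show (4:ℕ) = 2 ^ 2 from rfl, Nat.testBit_mod_two_pow]

lemma xor_mod4 (x y : ℕ) : (x ^^^ y) % 4 = x % 4 ^^^ y % 4 := by
  apply Nat.eq_of_testBit_eq
  intro i
  simp only [Nat.testBit_xor, testBit_mod4]
  by_cases h : i < 2 <;> simp [h]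

lemma mod4_lt (x : ℕ) : x % 4 < 4 := Nat.mod_lt _ (by norm_num)

lemma xor_bit_eq_false {x y : ℕ} {i : ℕ} (h : (x ^^^ y).testBit i = false) :
    x.testBit i = y.testBit i := by
  rw [Nat.testBit_xor] at h
  revert h
  cases x.testBit i <;> cases y.testBit i <;> simp

lemma mod4_eq_of_bits {x y : ℕ} (h0 : (x ^^^ y).testBit 0 = false)
    (h1 : (x ^^^ y).testBit 1 = false) : x % 4 = y % 4 := by
  apply Nat.eq_of_testBit_eq
  intro i
  simp only [testBit_mod4]
  match i with
  | 0 => rw [xor_bit_eq_false h0]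
  | 1 => rw [xor_bit_eq_false h1]
  | (i+2) => simp

lemma bits_of_mod4_eq {x y : ℕ} (h : x % 4 = y % 4) {i : ℕ} (hi : i < 2) :
    x.testBit i = y.testBit i := by
  have := congrArg (fun z => z.testBit i) h
  simpa [testBit_mod4, hi] using this

/-! ### the edge maps -/

/-- the difference actually applied at `x` by the map with code `c` -/
def adjust (lam c x : ℕ) : ℕ :=
  match spec lam c with
  | some (t, b) => bif (x.testBit (t+1)).xor b then 3 * 2 ^ (t - 1) else 2 ^ (t - 1)
  | none => c

/-- the involution with code `c` -/
def mfun (lam c x : ℕ) : ℕ := x ^^^ adjust lam c x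

lemma adjust_none {lam c : ℕ} (h : spec lam c = none) (x : ℕ) : adjust lam c x = c := by
  unfold adjust; rw [h]

lemma adjust_some {lam c t : ℕ} {b : Bool} (h : spec lam c = some (t, b)) (x : ℕ) :
    adjust lam c x = (bif (x.testBit (t+1)).xor b then 3 * 2 ^ (t - 1) else 2 ^ (t - 1)) := by
  unfold adjust; rw [h]

lemma adjust_spec {lam c t : ℕ} {b : Bool} (h : spec lam c = some (t, b)) (x : ℕ) :
    spec lam (adjust lam c x) = some (t, (x.testBit (t+1)).xor b) := by
  obtain ⟨h1, h2, -⟩ := spec_some h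
  rw [adjust_some h]
  exact spec_of _ h1 h2

lemma adjust_ne_zero {lam c : ℕ} (hc : c ≠ 0) (x : ℕ) : adjust lam c x ≠ 0 := by
  cases hs : spec lam c with
  | none => rw [adjust_none hs]; exact hc
  | some p =>
    obtain ⟨t, b⟩ := p
    have hp : (0:ℕ) < 2 ^ (t-1) := Nat.pow_pos (by norm_num)
    rw [adjust_some hs]
    cases (x.testBit (t+1)).xor b <;> simp <;> omega

lemma adjust_lt {lam c : ℕ} (hc : c < 2 ^ (lam + 1)) (x : ℕ) :
    adjust lam c x < 2 ^ (lam + 1) := by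
  cases hs : spec lam c with
  | none => rw [adjust_none hs]; exact hc
  | some p =>
    obtain ⟨t, b⟩ := p
    obtain ⟨h1, h2, -⟩ := spec_some hs
    have hp : (0:ℕ) < 2 ^ (t-1) := Nat.pow_pos (by norm_num)
    have h4 : 3 * 2 ^ (t - 1) < 2 ^ (t + 1) := by
      calc 3 * 2 ^ (t-1) < 4 * 2 ^ (t-1) := by omega
        _ = 2 ^ (t+1) := by rw [show (4:ℕ) = 2^2 by norm_num, ← pow_add]; congr 1; omega
    have h5 : 2 ^ (t + 1) ≤ 2 ^ (lam + 1) := Nat.pow_le_pow_right (by norm_num) (by omega)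
    rw [adjust_some hs]
    cases (x.testBit (t+1)).xor b <;> simp <;> omega

lemma adjust_testBit_of_ne {lam c t : ℕ} {b : Bool} (h : spec lam c = some (t, b)) (x i : ℕ)
    (hi1 : i ≠ t - 1) (hi2 : i ≠ t) : (adjust lam c x).testBit i = false := by
  obtain ⟨ht, -, -⟩ := spec_some h
  rw [adjust_some h]
  cases (x.testBit (t+1)).xor b <;>
    simp only [cond_true, cond_false, testBit_3pow, Nat.testBit_two_pow] <;>
    simp <;> omega

lemma mfun_lt {lam c x : ℕ} (hc : c < 2 ^ (lam + 1)) (hx : x < 2 ^ (lam + 1)) :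
    mfun lam c x < 2 ^ (lam + 1) :=
  Nat.xor_lt_two_pow hx (adjust_lt hc x)

lemma mfun_testBit_high {lam c t : ℕ} {b : Bool} (h : spec lam c = some (t, b)) (x : ℕ) :
    (mfun lam c x).testBit (t+1) = x.testBit (t+1) := by
  obtain ⟨ht, -, -⟩ := spec_some h
  unfold mfun
  rw [Nat.testBit_xor, adjust_testBit_of_ne h x (t+1) (by omega) (by omega)]
  simp

lemma mfun_invol (lam c x : ℕ) : mfun lam c (mfun lam c x) = x := by
  cases hs : spec lam c with
  | none =>
    show mfun lam c x ^^^ adjust lam c (mfun lam c x) = x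
    rw [adjust_none hs]
    show (x ^^^ adjust lam c x) ^^^ c = x
    rw [adjust_none hs, xor_cancel_right]
  | some p =>
    obtain ⟨t, b⟩ := p
    show mfun lam c x ^^^ adjust lam c (mfun lam c x) = x
    rw [adjust_some hs, mfun_testBit_high hs]
    show (x ^^^ adjust lam c x) ^^^ _ = x
    rw [adjust_some hs, xor_cancel_right]

lemma mfun_ne {lam c : ℕ} (hc : c ≠ 0) (x : ℕ) : mfun lam c x ≠ x := by
  intro h
  apply adjust_ne_zero hc x
  have : x ^^^ adjust lam c x = x ^^^ 0 := by
    rw [Nat.xor_zero]; exact h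
  exact xor_left_cancel this

lemma mfun_diff_none {lam c : ℕ} (hs : spec lam c = none) (u v : ℕ) :
    mfun lam c u ^^^ mfun lam c v = u ^^^ v := by
  unfold mfun
  rw [adjust_none hs, adjust_none hs, xor_shuffle, Nat.xor_self, Nat.xor_zero]

lemma mfun_diff_some {lam c t : ℕ} {b : Bool} (hs : spec lam c = some (t, b)) (u v : ℕ) :
    mfun lam c u ^^^ mfun lam c v =
      (u ^^^ v) ^^^ (bif (u.testBit (t+1)).xor (v.testBit (t+1)) then 2 ^ t else 0) := by
  obtain ⟨ht, -, -⟩ := spec_some hs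
  have key : 2 ^ (t-1) ^^^ 3 * 2 ^ (t-1) = 2 ^ t := by
    rw [← pow_xor3, xor_cancel_left]
    congr 1; omega
  have key' : 3 * 2 ^ (t-1) ^^^ 2 ^ (t-1) = 2 ^ t := by rw [Nat.xor_comm]; exact key
  unfold mfun
  rw [adjust_some hs, adjust_some hs, xor_shuffle]
  congr 1
  cases hu : u.testBit (t+1) <;> cases hv : v.testBit (t+1) <;> cases b <;>
    simp only [Bool.xor_false, Bool.xor_true, Bool.not_true, Bool.not_false,
      cond_true, cond_false, Nat.xor_self, key, key'] <;> rfl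

lemma mfun_inj {lam c c' x : ℕ} (hc : c ≠ 0) (hc' : c' ≠ 0)
    (h : mfun lam c x = mfun lam c' x) : c = c' := by
  have hA : adjust lam c x = adjust lam c' x := xor_left_cancel (a := x) h
  cases hs : spec lam c with
  | none =>
    cases hs' : spec lam c' with
    | none => rw [adjust_none hs, adjust_none hs'] at hA; exact hA
    | some p =>
      obtain ⟨t', b'⟩ := p
      exfalso
      rw [adjust_none hs] at hA
      rw [hA, adjust_spec hs'] at hs
      simp at hs
  | some p =>
    obtain ⟨t, b⟩ := p
    cases hs' : spec lam c' with
    | none =>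
      exfalso
      rw [adjust_none hs'] at hA
      rw [← hA, adjust_spec hs] at hs'
      simp at hs'
    | some p' =>
      obtain ⟨t', b'⟩ := p'
      have e := adjust_spec hs x
      have e' := adjust_spec hs' x
      rw [hA, e'] at e
      rw [Option.some_inj, Prod.mk.injEq] at e
      obtain ⟨rfl, e2⟩ := e
      have hb : b = b' := by
        cases b <;> cases b' <;> simp_all
      subst hb
      obtain ⟨-, -, hc1⟩ := spec_some hs
      obtain ⟨-, -, hc2⟩ := spec_some hs'
      rw [hc1, hc2]

/-- the code of the unique map taking `x` to `y` -/
def code (lam x y : ℕ) : ℕ := adjust lam (x ^^^ y) x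

lemma code_ne_zero {lam x y : ℕ} (h : x ≠ y) : code lam x y ≠ 0 :=
  adjust_ne_zero (fun h0 => h (xor_eq_zero_iff.1 h0)) x

lemma code_lt {lam x y : ℕ} (hx : x < 2 ^ (lam+1)) (hy : y < 2 ^ (lam+1)) :
    code lam x y < 2 ^ (lam + 1) :=
  adjust_lt (Nat.xor_lt_two_pow hx hy) x

lemma mfun_code {lam x y : ℕ} : mfun lam (code lam x y) x = y := by
  cases hs : spec lam (x ^^^ y) with
  | none =>
    show x ^^^ adjust lam (code lam x y) x = y
    have hc : code lam x y = x ^^^ y := adjust_none hs x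
    rw [hc, adjust_none hs, xor_cancel_left]
  | some p =>
    obtain ⟨t, b⟩ := p
    obtain ⟨ht, htl, hxy⟩ := spec_some hs
    show x ^^^ adjust lam (code lam x y) x = y
    have hsc : spec lam (code lam x y) = some (t, (x.testBit (t+1)).xor b) :=
      adjust_spec hs x
    rw [adjust_some hsc]
    have hbb : ((x.testBit (t+1)).xor ((x.testBit (t+1)).xor b)) = b := by
      cases x.testBit (t+1) <;> cases b <;> rfl
    rw [hbb, ← hxy, xor_cancel_left]

/-! ### the port permutation -/

/-- permutation of the (1-based) port slots applied at a vertex in class `v = x % 4` -/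
def tau (lam v c : ℕ) : ℕ :=
  if c ≠ 0 ∧ spec lam c = none ∧ c ^^^ v ≠ 0 ∧ spec lam (c ^^^ v) = none then c ^^^ v else c

lemma tau_invol (lam v c : ℕ) : tau lam v (tau lam v c) = c := by
  by_cases h1 : c ≠ 0 ∧ spec lam c = none ∧ c ^^^ v ≠ 0 ∧ spec lam (c ^^^ v) = none
  · have h2 : (c ^^^ v) ≠ 0 ∧ spec lam (c ^^^ v) = none ∧
        (c ^^^ v) ^^^ v ≠ 0 ∧ spec lam ((c ^^^ v) ^^^ v) = none := by
      refine ⟨h1.2.2.1, h1.2.2.2, ?_, ?_⟩ <;> rw [xor_cancel_right]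
      · exact h1.1
      · exact h1.2.1
    unfold tau
    rw [if_pos h1, if_pos h2, xor_cancel_right]
  · unfold tau
    rw [if_neg h1, if_neg h1]

lemma tau_ne_zero {lam v c : ℕ} (hc : c ≠ 0) : tau lam v c ≠ 0 := by
  unfold tau
  split_ifs with h1
  · exact h1.2.2.1
  · exact hc

lemma tau_lt {lam v c n : ℕ} (hc : c < 2 ^ n) (hv : v < 2 ^ n) : tau lam v c < 2 ^ n := by
  unfold tau
  split_ifs with h1
  · exact Nat.xor_lt_two_pow hc hv
  · exact hc

lemma tau_spec_some {lam v c : ℕ} {p : ℕ × Bool} (h : spec lam c = some p) :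
    tau lam v c = c := by
  unfold tau
  rw [if_neg]
  rintro ⟨-, h2, -⟩
  rw [h] at h2
  exact absurd h2 (by simp)

lemma tau_spec_none {lam v c : ℕ} (h : spec lam c = none) :
    spec lam (tau lam v c) = none := by
  unfold tau
  split_ifs with h1
  · exact h1.2.2.2
  · exact h

/-! ### the port graph -/

lemma mod4_lt_pow {lam : ℕ} (x : Fin (2 ^ (lam + 1))) : x.val % 4 < 2 ^ (lam + 1) :=
  lt_of_le_of_lt (Nat.mod_le _ _) x.isLt

/-- the `next` function of the port-numbered clique -/
def pnext (lam : ℕ) (x : Fin (2 ^ (lam + 1))) (i : ℕ) : Option (Fin (2 ^ (lam + 1)) × ℕ) :=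
  if h : i + 2 ≤ 2 ^ (lam + 1) then
    some (⟨mfun lam (tau lam (x.val % 4) (i + 1)) x.val,
           mfun_lt (tau_lt (n := lam + 1) (by omega) (mod4_lt_pow x)) x.isLt⟩,
          tau lam ((mfun lam (tau lam (x.val % 4) (i + 1)) x.val) % 4)
            (tau lam (x.val % 4) (i + 1)) - 1)
  else none

lemma pnext_eq {lam : ℕ} (x : Fin (2 ^ (lam + 1))) {i : ℕ} (h : i + 2 ≤ 2 ^ (lam + 1)) :
    pnext lam x i =
      some (⟨mfun lam (tau lam (x.val % 4) (i + 1)) x.val,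
             mfun_lt (tau_lt (n := lam + 1) (by omega) (mod4_lt_pow x)) x.isLt⟩,
            tau lam ((mfun lam (tau lam (x.val % 4) (i + 1)) x.val) % 4)
              (tau lam (x.val % 4) (i + 1)) - 1) :=
  dif_pos h

lemma pnext_some {lam : ℕ} {x y : Fin (2 ^ (lam + 1))} {i j : ℕ}
    (h : pnext lam x i = some (y, j)) :
    i + 2 ≤ 2 ^ (lam + 1) ∧
      y.val = mfun lam (tau lam (x.val % 4) (i + 1)) x.val ∧
      j = tau lam (y.val % 4) (tau lam (x.val % 4) (i + 1)) - 1 := by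
  unfold pnext at h
  split_ifs at h with hi
  refine ⟨hi, ?_⟩
  rw [Option.some_inj, Prod.mk.injEq] at h
  obtain ⟨h1, h2⟩ := h
  have h1' : y.val = mfun lam (tau lam (x.val % 4) (i + 1)) x.val := by rw [← h1]
  exact ⟨h1', by rw [← h2, h1']⟩

/-- the port-numbered clique on `2^(lam+1)` vertices -/
def PG (lam : ℕ) : PortGraph (Fin (2 ^ (lam + 1))) where
  deg _ := 2 ^ (lam + 1) - 1
  next := pnext lam
  next_isSome := by
    intro x i
    unfold pnext
    split_ifs with h <;> simp <;> omega
  next_symm := by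
    intro x i y j h
    obtain ⟨hi, hy, hj⟩ := pnext_some h
    have hc0 : tau lam (x.val % 4) (i + 1) ≠ 0 := tau_ne_zero (by omega)
    have hclt : tau lam (x.val % 4) (i + 1) < 2 ^ (lam + 1) :=
      tau_lt (n := lam + 1) (by omega) (mod4_lt_pow x)
    have htau0 : tau lam (y.val % 4) (tau lam (x.val % 4) (i + 1)) ≠ 0 := tau_ne_zero hc0
    have htault : tau lam (y.val % 4) (tau lam (x.val % 4) (i + 1)) < 2 ^ (lam + 1) :=
      tau_lt hclt (mod4_lt_pow y)
    have hj1 : j + 1 = tau lam (y.val % 4) (tau lam (x.val % 4) (i + 1)) := by omega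
    have hj2 : j + 2 ≤ 2 ^ (lam + 1) := by omega
    rw [pnext_eq y hj2, Option.some_inj]
    have e1 : tau lam (y.val % 4) (j + 1) = tau lam (x.val % 4) (i + 1) := by
      rw [hj1, tau_invol]
    have e2 : mfun lam (tau lam (y.val % 4) (j + 1)) y.val = x.val := by
      rw [e1, hy, mfun_invol]
    refine Prod.ext (Fin.ext e2) ?_
    show tau lam (mfun lam (tau lam (y.val % 4) (j + 1)) y.val % 4)
        (tau lam (y.val % 4) (j + 1)) - 1 = i
    rw [e2, e1, tau_invol]
    omega
  next_ne := by
    intro x i y j h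
    obtain ⟨hi, hy, -⟩ := pnext_some h
    intro hxy
    apply mfun_ne (tau_ne_zero (c := i + 1) (by omega)) x.val
    rw [← hy, hxy]
  next_inj := by
    intro x i i' y j j' h h'
    obtain ⟨hi, hy, -⟩ := pnext_some h
    obtain ⟨hi', hy', -⟩ := pnext_some h'
    have e : tau lam (x.val % 4) (i + 1) = tau lam (x.val % 4) (i' + 1) :=
      mfun_inj (tau_ne_zero (by omega)) (tau_ne_zero (by omega)) (by rw [← hy, ← hy'])
    have := congrArg (tau lam (x.val % 4)) e
    rw [tau_invol, tau_invol] at this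
    omega
  connected := by
    intro u v
    rcases eq_or_ne u v with rfl | huv
    · exact Relation.ReflTransGen.refl
    · refine Relation.ReflTransGen.single ?_
      have hC0 : code lam u.val v.val ≠ 0 :=
        code_ne_zero (fun hv => huv (Fin.ext hv))
      have hClt : code lam u.val v.val < 2 ^ (lam + 1) := code_lt u.isLt v.isLt
      have hs0 : tau lam (u.val % 4) (code lam u.val v.val) ≠ 0 := tau_ne_zero hC0
      have hslt : tau lam (u.val % 4) (code lam u.val v.val) < 2 ^ (lam + 1) :=
        tau_lt hClt (mod4_lt_pow u)
      set i := tau lam (u.val % 4) (code lam u.val v.val) - 1 with hidef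
      have hi : i + 2 ≤ 2 ^ (lam + 1) := by omega
      have hi1 : i + 1 = tau lam (u.val % 4) (code lam u.val v.val) := by omega
      refine ⟨i, tau lam ((mfun lam (tau lam (u.val % 4) (i + 1)) u.val) % 4)
        (tau lam (u.val % 4) (i + 1)) - 1, ?_⟩
      rw [pnext_eq u hi, Option.some_inj]
      have e1 : tau lam (u.val % 4) (i + 1) = code lam u.val v.val := by
        rw [hi1, tau_invol]
      have e2 : mfun lam (tau lam (u.val % 4) (i + 1)) u.val = v.val := by
        rw [e1, mfun_code]
      exact Prod.ext (Fin.ext e2) rfl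

lemma exists_port {lam : ℕ} {u v : Fin (2 ^ (lam + 1))} (huv : u ≠ v) :
    ∃ i j, pnext lam u i = some (v, j) := by
  have hC0 : code lam u.val v.val ≠ 0 := code_ne_zero (fun hv => huv (Fin.ext hv))
  have hClt : code lam u.val v.val < 2 ^ (lam + 1) := code_lt u.isLt v.isLt
  have hs0 : tau lam (u.val % 4) (code lam u.val v.val) ≠ 0 := tau_ne_zero hC0
  have hslt : tau lam (u.val % 4) (code lam u.val v.val) < 2 ^ (lam + 1) :=
    tau_lt hClt (mod4_lt_pow u)
  set i := tau lam (u.val % 4) (code lam u.val v.val) - 1 with hidef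
  have hi : i + 2 ≤ 2 ^ (lam + 1) := by omega
  have hi1 : i + 1 = tau lam (u.val % 4) (code lam u.val v.val) := by omega
  refine ⟨i, tau lam ((mfun lam (tau lam (u.val % 4) (i + 1)) u.val) % 4)
    (tau lam (u.val % 4) (i + 1)) - 1, ?_⟩
  rw [pnext_eq u hi, Option.some_inj]
  have e1 : tau lam (u.val % 4) (i + 1) = code lam u.val v.val := by
    rw [hi1, tau_invol]
  have e2 : mfun lam (tau lam (u.val % 4) (i + 1)) u.val = v.val := by
    rw [e1, mfun_code]
  exact Prod.ext (Fin.ext e2) rfl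

lemma PG_top (lam : ℕ) : (PG lam).toSimpleGraph = ⊤ := by
  ext a b
  simp only [SimpleGraph.top_adj]
  constructor
  · rintro ⟨i, j, h⟩
    exact Ne.symm ((PG lam).next_ne a i b j h)
  · intro hab
    obtain ⟨i, j, h⟩ := exists_port hab
    exact ⟨i, j, h⟩

/-! ### generic view lemmas -/

section Generic

variable {V : Type*} [Fintype V]

lemma viewEq_refl (P : PortGraph V) : ∀ (t : ℕ) (v : V), P.viewEq t v v
  | 0, _ => rfl
  | (t+1), v => by
    refine ⟨rfl, ?_⟩
    intro i j j' u' v' h h'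
    rw [h, Option.some_inj, Prod.mk.injEq] at h'
    obtain ⟨rfl, rfl⟩ := h'
    exact ⟨rfl, viewEq_refl P t u'⟩

lemma viewEq_mono (P : PortGraph V) :
    ∀ (t : ℕ) (u v : V), P.viewEq (t+1) u v → P.viewEq t u v
  | 0, _, _, h => h.1
  | (t+1), _, _, h =>
    ⟨h.1, fun i j j' u' v' hu hv =>
      ⟨(h.2 i j j' u' v' hu hv).1, viewEq_mono P t u' v' (h.2 i j j' u' v' hu hv).2⟩⟩

lemma viewEq_sub (P : PortGraph V) :
    ∀ (k t : ℕ) (u v : V), P.viewEq (t + k) u v → P.viewEq t u v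
  | 0, _, _, _, h => h
  | (k+1), t, u, v, h => by
    have h' : P.viewEq (t + k) u v := by
      have := viewEq_mono P (t + k) u v
      exact this (by rw [show t + k + 1 = t + (k+1) from rfl]; exact h)
    exact viewEq_sub P k t u v h'

lemma viewEq_le (P : PortGraph V) {t t' : ℕ} (h : t' ≤ t) {u v : V}
    (hv : P.viewEq t u v) : P.viewEq t' u v := by
  obtain ⟨k, rfl⟩ := Nat.exists_eq_add_of_le h
  exact viewEq_sub P k t' u v hv

end Generic

/-! ### children bit control -/

lemma diff_bits {lam c T : ℕ} {u v : ℕ}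
    (hbits : ∀ j, j ≤ T + 1 → (u ^^^ v).testBit j = false) :
    ∀ j, j ≤ T → ((mfun lam c u) ^^^ (mfun lam c v)).testBit j = false := by
  intro j hj
  cases hs : spec lam c with
  | none => rw [mfun_diff_none hs]; exact hbits j (by omega)
  | some p =>
    obtain ⟨t, b⟩ := p
    rw [mfun_diff_some hs, Nat.testBit_xor, hbits j (by omega), Bool.false_xor]
    cases hq : (u.testBit (t+1)).xor (v.testBit (t+1))
    · simp
    · have hne : (u ^^^ v).testBit (t+1) = true := by rw [Nat.testBit_xor]; exact hq
      have hgt : T + 1 < t + 1 := by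
        by_contra hle
        rw [hbits (t+1) (by omega)] at hne
        exact Bool.noConfusion hne
      simp only [cond_true, Nat.testBit_two_pow]
      simp only [decide_eq_false_iff_not]
      omega

lemma mod4_eq_of_bits01 {u v : ℕ} (hb : ∀ j, j ≤ 1 → (u ^^^ v).testBit j = false) :
    u % 4 = v % 4 :=
  mod4_eq_of_bits (hb 0 (by omega)) (hb 1 le_rfl)

lemma bits01_of_mod4_eq {u v : ℕ} (h : u % 4 = v % 4) :
    ∀ j, j ≤ 1 → (u ^^^ v).testBit j = false := by
  intro j hj
  rw [Nat.testBit_xor, bits_of_mod4_eq h (by omega)]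
  exact Bool.xor_self _

/-! ### the observable return port at a free slot -/

def obs (lam s w : ℕ) : ℕ := tau lam ((w ^^^ tau lam w s) % 4) (tau lam w s)

lemma obs_ne_zero {lam s w : ℕ} (hs : s ≠ 0) : obs lam s w ≠ 0 :=
  tau_ne_zero (tau_ne_zero hs)

lemma pnext_ret {lam : ℕ} (x : Fin (2 ^ (lam + 1))) {i : ℕ} (hi : i + 2 ≤ 2 ^ (lam + 1))
    (hfree : spec lam (i + 1) = none) {y : Fin (2 ^ (lam + 1))} {j : ℕ}
    (h : pnext lam x i = some (y, j)) : j = obs lam (i + 1) (x.val % 4) - 1 := by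
  obtain ⟨-, hy, hj⟩ := pnext_some h
  have hcfree : spec lam (tau lam (x.val % 4) (i + 1)) = none := tau_spec_none hfree
  have hm : mfun lam (tau lam (x.val % 4) (i + 1)) x.val
      = x.val ^^^ tau lam (x.val % 4) (i + 1) := by
    unfold mfun
    rw [adjust_none hcfree]
  have hmod : y.val % 4 = ((x.val % 4) ^^^ tau lam (x.val % 4) (i + 1)) % 4 := by
    rw [hy, hm, xor_mod4, xor_mod4]
    have : x.val % 4 % 4 = x.val % 4 := by omega
    rw [this]
  rw [hj, hmod]
  rfl

lemma spec_none_of_lam_le_one {lam c : ℕ} (hlam : lam ≤ 1) : spec lam c = none := by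
  unfold spec
  split_ifs with h1 h2
  · exfalso; omega
  · exfalso; omega
  · rfl

lemma obs_high {lam : ℕ} (hlam : 2 ≤ lam) {w : ℕ} (hw : w < 4) :
    obs lam (2 ^ lam) w = 2 ^ lam ^^^ w := by
  have h4 : (4:ℕ) ≤ 2 ^ lam := by
    calc (4:ℕ) = 2 ^ 2 := by norm_num
      _ ≤ 2 ^ lam := Nat.pow_le_pow_right (by norm_num) hlam
  have hwlt : w < 2 ^ lam := by omega
  have hbit : (2 ^ lam ^^^ w).testBit lam = true := by
    rw [Nat.testBit_xor, Nat.testBit_two_pow, Nat.testBit_lt_two_pow hwlt]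
    simp
  have hge : 2 ^ lam ≤ 2 ^ lam ^^^ w := Nat.ge_two_pow_of_testBit hbit
  have h1 : tau lam w (2 ^ lam) = 2 ^ lam ^^^ w := by
    unfold tau
    rw [if_pos ⟨by omega, spec_none_of_ge le_rfl, by omega, spec_none_of_ge hge⟩]
  unfold obs
  rw [h1]
  have h2 : (w ^^^ (2 ^ lam ^^^ w)) % 4 = 0 := by
    rw [Nat.xor_comm (2 ^ lam) w, xor_cancel_left]
    have e : 2 ^ lam = 2 ^ (lam - 2) * 4 := by
      rw [show (4:ℕ) = 2 ^ 2 by norm_num, ← pow_add]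
      congr 1; omega
    omega
  rw [h2]
  unfold tau
  rw [if_pos ⟨by omega, spec_none_of_ge hge, by rw [Nat.xor_zero]; omega,
    by rw [Nat.xor_zero]; exact spec_none_of_ge hge⟩, Nat.xor_zero]

lemma obs_inj {lam : ℕ} (hlam : 1 ≤ lam) {w w' : ℕ} (hw : w < 4) (hw' : w' < 4)
    (h1 : obs lam (2 ^ lam) w = obs lam (2 ^ lam) w')
    (h2 : obs lam (2 ^ lam ^^^ 1) w = obs lam (2 ^ lam ^^^ 1) w') : w = w' := by
  rcases Nat.lt_or_ge lam 2 with hl | hl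
  · have hlam1 : lam = 1 := by omega
    subst hlam1
    have htau : ∀ v c : ℕ, tau 1 v c = if c ≠ 0 ∧ c ^^^ v ≠ 0 then c ^^^ v else c := by
      intro v c
      unfold tau
      simp [spec_none_of_lam_le_one (le_refl 1)]
    simp only [obs, htau, pow_one] at h1 h2
    interval_cases w <;> interval_cases w' <;> revert h1 h2 <;> decide
  · rw [obs_high hl hw, obs_high hl hw'] at h1
    have := congrArg (fun z => 2 ^ lam ^^^ z) h1
    simpa only [xor_cancel_left] using this

/-! ### the characterization of truncated views -/

lemma viewEq_one_iff {lam : ℕ} (hlam : 1 ≤ lam) (u v : Fin (2 ^ (lam + 1))) :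
    (PG lam).viewEq 1 u v ↔ ∀ j, j ≤ 1 → (u.val ^^^ v.val).testBit j = false := by
  constructor
  · intro h
    have hppos : (1:ℕ) < 2 ^ lam := by
      calc (1:ℕ) < 2 ^ 1 := by norm_num
        _ ≤ 2 ^ lam := Nat.pow_le_pow_right (by norm_num) hlam
    have hplt : 2 ^ lam < 2 ^ (lam + 1) := Nat.pow_lt_pow_right one_lt_two (by omega)
    have hdouble : 2 * 2 ^ lam = 2 ^ (lam + 1) := by rw [pow_succ]; ring
    set i0 := 2 ^ lam - 1 with hi0
    have hi0' : i0 + 1 = 2 ^ lam := by omega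
    have hi0'' : i0 + 2 ≤ 2 ^ (lam + 1) := by omega
    have hs1bit : (2 ^ lam ^^^ 1 : ℕ).testBit lam = true := by
      rw [Nat.testBit_xor, Nat.testBit_two_pow,
        Nat.testBit_lt_two_pow (show (1:ℕ) < 2 ^ lam by omega)]
      simp
    have hs1ge : 2 ^ lam ≤ 2 ^ lam ^^^ 1 := Nat.ge_two_pow_of_testBit hs1bit
    have hs1lt : 2 ^ lam ^^^ 1 < 2 ^ (lam + 1) := Nat.xor_lt_two_pow hplt (by omega)
    set i1 := (2 ^ lam ^^^ 1) - 1 with hi1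
    have hi1' : i1 + 1 = 2 ^ lam ^^^ 1 := by omega
    have hi1'' : i1 + 2 ≤ 2 ^ (lam + 1) := by omega
    obtain ⟨-, h2⟩ := h
    have hu0 := pnext_eq u hi0''
    have hv0 := pnext_eq v hi0''
    have hj0 := (h2 i0 _ _ _ _ hu0 hv0).1
    have hu1 := pnext_eq u hi1''
    have hv1 := pnext_eq v hi1''
    have hj1 := (h2 i1 _ _ _ _ hu1 hv1).1
    have hfree0 : spec lam (i0 + 1) = none := by rw [hi0']; exact spec_none_of_ge le_rfl
    have hfree1 : spec lam (i1 + 1) = none := by rw [hi1']; exact spec_none_of_ge hs1ge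
    have e1 := pnext_ret u hi0'' hfree0 hu0
    have e2 := pnext_ret v hi0'' hfree0 hv0
    have e3 := pnext_ret u hi1'' hfree1 hu1
    have e4 := pnext_ret v hi1'' hfree1 hv1
    have n1 := obs_ne_zero (lam := lam) (w := u.val % 4) (s := i0 + 1) (by omega)
    have n2 := obs_ne_zero (lam := lam) (w := v.val % 4) (s := i0 + 1) (by omega)
    have n3 := obs_ne_zero (lam := lam) (w := u.val % 4) (s := i1 + 1) (by omega)
    have n4 := obs_ne_zero (lam := lam) (w := v.val % 4) (s := i1 + 1) (by omega)
    have hobs0 : obs lam (i0 + 1) (u.val % 4) = obs lam (i0 + 1) (v.val % 4) := by omega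
    have hobs1 : obs lam (i1 + 1) (u.val % 4) = obs lam (i1 + 1) (v.val % 4) := by omega
    rw [hi0'] at hobs0
    rw [hi1'] at hobs1
    exact bits01_of_mod4_eq (obs_inj hlam (mod4_lt u.val) (mod4_lt v.val) hobs0 hobs1)
  · intro hb
    refine ⟨rfl, ?_⟩
    intro i j j' u' v' hu hv
    obtain ⟨hi, hyu, hju⟩ := pnext_some hu
    obtain ⟨-, hyv, hjv⟩ := pnext_some hv
    have hm : u.val % 4 = v.val % 4 := mod4_eq_of_bits01 hb
    constructor
    · rw [hju, hjv, hm]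
      cases hs : spec lam (tau lam (v.val % 4) (i + 1)) with
      | some p => rw [tau_spec_some hs, tau_spec_some hs]
      | none =>
        have hyy : u'.val % 4 = v'.val % 4 := by
          apply mod4_eq_of_bits01
          intro j0 hj0
          rw [hyu, hyv, hm, mfun_diff_none hs]
          exact hb j0 hj0
        rw [hyy]
    · exact rfl

lemma viewEq_succ_iff {lam t : ℕ} (hlam : 1 ≤ lam) (ht : 1 ≤ t)
    (IH : ∀ u v : Fin (2 ^ (lam + 1)),
      (PG lam).viewEq t u v ↔ ∀ j, j ≤ t → (u.val ^^^ v.val).testBit j = false)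
    (u v : Fin (2 ^ (lam + 1))) :
    (PG lam).viewEq (t + 1) u v ↔
      ∀ j, j ≤ t + 1 → (u.val ^^^ v.val).testBit j = false := by
  constructor
  · intro h
    intro j hj
    rcases Nat.lt_or_ge j (t + 1) with hjt | hjt
    · exact (IH u v).1 (viewEq_mono _ _ _ _ h) j (by omega)
    · have hj' : j = t + 1 := by omega
      subst hj'
      rcases Nat.lt_or_ge lam (t + 1) with hl | hl
      · apply Nat.testBit_lt_two_pow
        calc u.val ^^^ v.val < 2 ^ (lam + 1) := Nat.xor_lt_two_pow u.isLt v.isLt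
          _ ≤ 2 ^ (t + 1) := Nat.pow_le_pow_right (by norm_num) (by omega)
      · by_contra hbit
        have hbit' : (u.val ^^^ v.val).testBit (t + 1) = true := by
          cases hq : (u.val ^^^ v.val).testBit (t + 1)
          · exact absurd hq hbit
          · rfl
        have hspec : spec lam (2 ^ (t - 1)) = some (t, false) := by
          have := spec_of (lam := lam) false ht (by omega)
          simpa using this
        have hc0pos : (1:ℕ) ≤ 2 ^ (t - 1) := Nat.one_le_two_pow
        have hc0lt : 2 ^ (t - 1) < 2 ^ (lam + 1) :=
          Nat.pow_lt_pow_right one_lt_two (by omega)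
        set i := 2 ^ (t - 1) - 1 with hidef
        have hi1 : i + 1 = 2 ^ (t - 1) := by omega
        have hi2 : i + 2 ≤ 2 ^ (lam + 1) := by omega
        have hu0 := pnext_eq u hi2
        have hv0 := pnext_eq v hi2
        have hch := (h.2 i _ _ _ _ hu0 hv0).2
        have htaufixu : tau lam (u.val % 4) (i + 1) = 2 ^ (t - 1) := by
          rw [hi1]; exact tau_spec_some hspec
        have htaufixv : tau lam (v.val % 4) (i + 1) = 2 ^ (t - 1) := by
          rw [hi1]; exact tau_spec_some hspec
        have hchbits := (IH _ _).1 hch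
        have contr : (mfun lam (tau lam (u.val % 4) (i + 1)) u.val ^^^
            mfun lam (tau lam (v.val % 4) (i + 1)) v.val).testBit t = false :=
          hchbits t le_rfl
        rw [htaufixu, htaufixv] at contr
        have hdiff : (mfun lam (2 ^ (t - 1)) u.val ^^^
            mfun lam (2 ^ (t - 1)) v.val).testBit t = true := by
          rw [mfun_diff_some hspec, Nat.testBit_xor]
          have hxorbit : (u.val.testBit (t + 1)).xor (v.val.testBit (t + 1)) = true := by
            rw [← Nat.testBit_xor]; exact hbit'
          rw [hxorbit]
          simp only [Bool.xor_false, cond_true, Nat.testBit_two_pow]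
          have hlow : (u.val ^^^ v.val).testBit t = false :=
            (IH u v).1 (viewEq_mono _ _ _ _ h) t le_rfl
          rw [hlow]
          simp
        rw [hdiff] at contr
        exact Bool.noConfusion contr
  · intro hb
    refine ⟨rfl, ?_⟩
    intro i j j' u' v' hu hv
    obtain ⟨hi, hyu, hju⟩ := pnext_some hu
    obtain ⟨-, hyv, hjv⟩ := pnext_some hv
    have hm : u.val % 4 = v.val % 4 :=
      mod4_eq_of_bits01 (fun j0 hj0 => hb j0 (by omega))
    have hychildbits : ∀ j0, j0 ≤ t → (u'.val ^^^ v'.val).testBit j0 = false := by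
      intro j0 hj0
      rw [hyu, hyv, hm]
      exact diff_bits (fun j1 hj1 => hb j1 hj1) j0 hj0
    constructor
    · rw [hju, hjv, hm]
      cases hs : spec lam (tau lam (v.val % 4) (i + 1)) with
      | some p => rw [tau_spec_some hs, tau_spec_some hs]
      | none =>
        have hyy : u'.val % 4 = v'.val % 4 :=
          mod4_eq_of_bits01 (fun j0 hj0 => hychildbits j0 (by omega))
        rw [hyy]
    · exact (IH u' v').2 hychildbits

theorem viewEq_iff {lam : ℕ} (hlam : 1 ≤ lam) :
    ∀ t, 1 ≤ t → ∀ u v : Fin (2 ^ (lam + 1)),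
      ((PG lam).viewEq t u v ↔ ∀ j, j ≤ t → (u.val ^^^ v.val).testBit j = false) := by
  intro t
  induction t with
  | zero => omega
  | succ t IHt =>
    intro _
    rcases Nat.eq_zero_or_pos t with rfl | ht
    · exact viewEq_one_iff hlam
    · exact viewEq_succ_iff hlam ht (IHt ht)

/-! ### consequences -/

lemma eq_of_viewEq_lam {lam : ℕ} (hlam : 1 ≤ lam) {u v : Fin (2 ^ (lam + 1))}
    (h : (PG lam).viewEq lam u v) : u = v := by
  have hb := (viewEq_iff hlam lam hlam u v).1 h
  apply Fin.ext
  have hz : u.val ^^^ v.val = 0 := by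
    apply Nat.eq_of_testBit_eq
    intro j
    rw [Nat.zero_testBit]
    rcases Nat.lt_or_ge lam j with hj | hj
    · exact Nat.testBit_lt_two_pow (lt_of_lt_of_le (Nat.xor_lt_two_pow u.isLt v.isLt)
        (Nat.pow_le_pow_right (by norm_num) (by omega)))
    · exact hb j hj
  exact xor_eq_zero_iff.1 hz

/-- the vertex whose views agree with those of `v` up to depth `lam - 1` -/
def twin {lam : ℕ} (v : Fin (2 ^ (lam + 1))) : Fin (2 ^ (lam + 1)) :=
  ⟨v.val ^^^ 2 ^ lam,
    Nat.xor_lt_two_pow v.isLt (Nat.pow_lt_pow_right one_lt_two (by omega))⟩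

lemma twin_ne {lam : ℕ} (v : Fin (2 ^ (lam + 1))) : twin v ≠ v := by
  intro h
  have hv : v.val ^^^ 2 ^ lam = v.val := congrArg Fin.val h
  have h0 : v.val ^^^ 2 ^ lam = v.val ^^^ 0 := by rw [Nat.xor_zero]; exact hv
  have := xor_left_cancel h0
  exact absurd this (by positivity)

lemma twin_viewEq {lam : ℕ} (hlam : 1 ≤ lam) (v : Fin (2 ^ (lam + 1))) :
    (PG lam).viewEq (lam - 1) (twin v) v := by
  rcases Nat.eq_or_lt_of_le hlam with h1 | h1
  · have h0 : lam - 1 = 0 := by omega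
    rw [h0]
    exact rfl
  · apply (viewEq_iff hlam (lam - 1) (by omega) _ _).2
    intro j hj
    have hd : (twin v).val ^^^ v.val = 2 ^ lam := by
      show (v.val ^^^ 2 ^ lam) ^^^ v.val = 2 ^ lam
      rw [Nat.xor_comm v.val (2 ^ lam), xor_cancel_right]
    rw [hd, Nat.testBit_two_pow]
    simp only [decide_eq_false_iff_not]
    omega

end L31

/-- (Lemma 3.1, existential form) For every `λ ≥ 1` there is a port numbering of the
complete graph on `2^{λ+1}` vertices such that all vertices have pairwise distinct views
at depth `λ` (in particular, all infinite views are pairwise distinct), while no vertex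
has a unique view at depth `λ - 1`; hence this clique has level of symmetry exactly `λ`. -/
theorem exists_clique_levelOfSymmetry (lam : ℕ) (hlam : 1 ≤ lam) :
    ∃ P : PortGraph (Fin (2 ^ (lam + 1))),
      P.toSimpleGraph = ⊤ ∧
      (∀ u v : Fin (2 ^ (lam + 1)), P.viewEq lam u v → u = v) ∧
      (∀ u v : Fin (2 ^ (lam + 1)), P.ViewEq u v → u = v) ∧
      (∀ v : Fin (2 ^ (lam + 1)), ∃ u : Fin (2 ^ (lam + 1)),
        u ≠ v ∧ P.viewEq (lam - 1) u v) ∧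
      IsLeast {t : ℕ | P.SymAt t} lam := by
  refine ⟨L31.PG lam, L31.PG_top lam, ?_, ?_, ?_, ?_, ?_⟩
  · intro u v h
    exact L31.eq_of_viewEq_lam hlam h
  · intro u v h
    exact L31.eq_of_viewEq_lam hlam (h lam)
  · intro v
    exact ⟨L31.twin v, L31.twin_ne v, L31.twin_viewEq hlam v⟩
  · -- SymAt lam
    refine ⟨⟨0, by positivity⟩, fun u => ⟨fun h => ?_, fun hV => hV lam⟩⟩
    have he : u = ⟨0, by positivity⟩ := L31.eq_of_viewEq_lam hlam h
    subst he
    intro t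
    exact L31.viewEq_refl _ t _
  · -- lower bound
    intro s hs
    obtain ⟨v, hv⟩ := hs
    by_contra hlt
    have hs1 : s ≤ lam - 1 := by omega
    have h1 : (L31.PG lam).viewEq s (L31.twin v) v :=
      L31.viewEq_le _ hs1 (L31.twin_viewEq hlam v)
    have h2 := (hv (L31.twin v)).1 h1
    exact L31.twin_ne v (L31.eq_of_viewEq_lam hlam (h2 lam))
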